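/- arXiv:1409.7344 — 4 statements merged into one kernel-verified Lean document; each statement's English description precedes it below -/
import Mathlib

section
/- Let T ∈ M_d(ℂ) be an invertible matrix, let r_i(T) denote the Euclidean norm of the i-th row of T, and let r_min(T) = min_{1≤i≤d} r_i(T). Then the smallest singular value σ_min(T) satisfies σ_min(T) ≥ ((d-1)/d)^{(d-1)/2} · |det T| · r_min(T) / ∏_{i=1}^d r_i(T). -/
open Matrix

section HongPanAux
open Finset
open scoped ComplexOrder

lemma amgm {ι : Type*} (s : Finset ι) (a : ι → ℝ) (ha : ∀ i ∈ s, 0 ≤ a i) :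
    ∏ i ∈ s, a i ≤ ((∑ i ∈ s, a i) / s.card) ^ s.card := by
  rcases s.eq_empty_or_nonempty with rfl | hs
  · simp
  have hc : (0:ℝ) < s.card := by exact_mod_cast Finset.card_pos.mpr hs
  have key := Real.geom_mean_le_arith_mean_weighted s (fun _ => 1 / s.card) a
      (fun i _ => by positivity) (by rw [Finset.sum_const, nsmul_eq_mul]; exact mul_one_div_cancel hc.ne') ha
  have h1 : ∀ i ∈ s, (a i ^ ((1:ℝ)/s.card)) ^ (s.card:ℕ) = a i := fun i hi => by
    rw [← Real.rpow_natCast (a i ^ ((1:ℝ)/s.card)) s.card, ← Real.rpow_mul (ha i hi),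
      one_div, inv_mul_cancel₀ (ne_of_gt hc), Real.rpow_one]
  calc ∏ i ∈ s, a i = (∏ i ∈ s, a i ^ ((1:ℝ)/s.card)) ^ (s.card:ℕ) := by
        rw [← Finset.prod_pow]; exact (Finset.prod_congr rfl h1).symm
    _ ≤ (∑ i ∈ s, (1/(s.card:ℝ)) * a i) ^ (s.card:ℕ) :=
        pow_le_pow_left₀ (Finset.prod_nonneg fun i hi => Real.rpow_nonneg (ha i hi) _) key _
    _ = ((∑ i ∈ s, a i) / s.card) ^ s.card := by rw [← Finset.mul_sum]; ring_nf

lemma core (d : ℕ) (hd : 0 < d) (B : Matrix (Fin d) (Fin d) ℂ) (hB : B.det ≠ 0)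
    (htr : ∑ i, ∑ j, ‖B i j‖ ^ 2 ≤ (d : ℝ))
    (x : Fin d → ℂ) (hx : ∑ i, ‖x i‖ ^ 2 = 1) :
    (((d:ℝ) - 1) / d) ^ (d - 1) * ‖B.det‖ ^ 2 ≤
      ∑ i, ‖B.mulVec x i‖ ^ 2 := by
  have hA : (Bᴴ * B).IsHermitian := (posSemidef_conjTranspose_mul_self B).isHermitian
  have hPSD : (Bᴴ * B).PosSemidef := posSemidef_conjTranspose_mul_self B
  set μ : Fin d → ℝ := hA.eigenvalues with hμ
  have hμ0 : ∀ i, 0 ≤ μ i := hPSD.eigenvalues_nonneg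
  have hdetA : (Bᴴ * B).det = ((‖B.det‖ ^ 2 : ℝ) : ℂ) := by
    rw [det_mul, det_conjTranspose, Complex.star_def, mul_comm, Complex.mul_conj,
      Complex.sq_norm]
  have hprodμ : ∏ i, μ i = ‖B.det‖ ^ 2 := by
    have h1 := hA.det_eq_prod_eigenvalues
    rw [hdetA] at h1
    rw [hA.det_eq_prod_eigenvalues] at hdetA
    refine Complex.ofReal_inj.mp ?_
    rw [Complex.ofReal_prod, ← hdetA]; rfl
  have hP : 0 < ∏ i, μ i := by
    rw [hprodμ]
    exact pow_pos (norm_pos_iff.mpr hB) 2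
  have hμpos : ∀ i, 0 < μ i := fun i =>
    (hμ0 i).lt_of_ne fun h => hP.ne' (Finset.prod_eq_zero (mem_univ i) h.symm)
  -- trace bound
  have htrA : ∑ i, μ i ≤ (d:ℝ) := by
    have hU1 : (hA.eigenvectorUnitary : Matrix (Fin d) (Fin d) ℂ) *
        star (hA.eigenvectorUnitary : Matrix (Fin d) (Fin d) ℂ) = 1 :=
      mem_unitaryGroup_iff.mp (hA.eigenvectorUnitary).2
    have h1 : (Bᴴ * B).trace = ∑ i, (μ i : ℂ) := by
      conv_lhs => rw [hA.spectral_theorem, Unitary.conjStarAlgAut_apply]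
      rw [trace_mul_cycle]
      rw [show star (hA.eigenvectorUnitary : Matrix (Fin d) (Fin d) ℂ) *
          (hA.eigenvectorUnitary : Matrix (Fin d) (Fin d) ℂ) = 1 from
        mem_unitaryGroup_iff'.mp (hA.eigenvectorUnitary).2, one_mul, trace_diagonal]
      rfl
    have h2 : (Bᴴ * B).trace = ((∑ j, ∑ i, ‖B i j‖ ^ 2 : ℝ) : ℂ) := by
      rw [trace]
      push_cast
      refine Finset.sum_congr rfl fun j _ => ?_
      simp only [diag_apply, mul_apply, conjTranspose_apply]
      push_cast
      refine Finset.sum_congr rfl fun i _ => ?_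
      rw [← Complex.ofReal_pow, Complex.sq_norm, Complex.star_def, mul_comm, Complex.mul_conj]
    rw [h2] at h1
    have h3 : ∑ i, μ i = ∑ j, ∑ i, ‖B i j‖ ^ 2 := by
      exact_mod_cast h1.symm
    rw [h3, Finset.sum_comm]
    exact htr
  set c : ℝ := (((d:ℝ) - 1) / d) ^ (d - 1) * ‖B.det‖ ^ 2 with hc
  have hd1R : (0:ℝ) ≤ (d:ℝ) - 1 := by
    have : (1:ℝ) ≤ d := by exact_mod_cast hd
    linarith
  have hkey : ∀ k, c ≤ μ k := by
    intro k
    have hcard : (univ.erase k).card = d - 1 := by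
      rw [Finset.card_erase_of_mem (mem_univ k), Finset.card_univ, Fintype.card_fin]
    have hsum : ∑ i ∈ univ.erase k, μ i ≤ (d:ℝ) :=
      le_trans (Finset.sum_le_sum_of_subset_of_nonneg (Finset.subset_univ _)
        (fun i _ _ => hμ0 i)) htrA
    have hprod_le : ∏ i ∈ univ.erase k, μ i ≤ ((d:ℝ)/((d:ℝ)-1)) ^ (d-1) := by
      refine le_trans (amgm _ _ (fun i _ => hμ0 i)) ?_
      rw [hcard, (by push_cast [Nat.cast_sub hd] ; ring : ((d-1:ℕ):ℝ) = (d:ℝ)-1)]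
      exact pow_le_pow_left₀
        (div_nonneg (Finset.sum_nonneg fun i _ => hμ0 i) hd1R)
        (div_le_div_of_nonneg_right hsum hd1R) _
    have hprodpos : 0 < ∏ i ∈ univ.erase k, μ i := Finset.prod_pos fun i _ => hμpos i
    have hsplit : μ k * ∏ i ∈ univ.erase k, μ i = ∏ i, μ i :=
      Finset.mul_prod_erase univ μ (mem_univ k)
    have hμk : μ k = (∏ i, μ i) / ∏ i ∈ univ.erase k, μ i := by
      rw [← hsplit, mul_div_cancel_right₀ _ hprodpos.ne']
    have hinv : (((d:ℝ)-1)/d) ^ (d-1) = (((d:ℝ)/((d:ℝ)-1)) ^ (d-1))⁻¹ := by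
      rw [← inv_pow, inv_div]
    calc c = (∏ i, μ i) / ((d:ℝ)/((d:ℝ)-1)) ^ (d-1) := by
          rw [hc, ← hprodμ, hinv]; ring
      _ ≤ (∏ i, μ i) / ∏ i ∈ univ.erase k, μ i :=
          div_le_div_of_nonneg_left (le_of_lt hP) hprodpos hprod_le
      _ = μ k := hμk.symm
  -- PSD shift part
  have hUU : (hA.eigenvectorUnitary : Matrix (Fin d) (Fin d) ℂ) *
      star (hA.eigenvectorUnitary : Matrix (Fin d) (Fin d) ℂ) = 1 :=
    mem_unitaryGroup_iff.mp (hA.eigenvectorUnitary).2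
  have hDps : (diagonal (fun i => ((μ i - c : ℝ) : ℂ))).PosSemidef :=
    posSemidef_diagonal_iff.mpr fun i =>
      Complex.zero_le_real.mpr (by linarith [hkey i])
  have hdiag : diagonal (fun i => ((μ i - c : ℝ) : ℂ)) =
      diagonal (RCLike.ofReal ∘ hA.eigenvalues) - (c:ℂ) • 1 := by
    rw [smul_one_eq_diagonal, diagonal_sub]
    congr 1
    funext i
    push_cast
    rfl
  have hM : Bᴴ * B - (c:ℂ) • 1 =
      (hA.eigenvectorUnitary : Matrix (Fin d) (Fin d) ℂ) *
        diagonal (fun i => ((μ i - c : ℝ) : ℂ)) *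
        star (hA.eigenvectorUnitary : Matrix (Fin d) (Fin d) ℂ) := by
    rw [hdiag, Matrix.mul_sub, Matrix.sub_mul, Matrix.mul_smul, mul_one,
      Matrix.smul_mul, hUU]
    conv_lhs => rw [hA.spectral_theorem, Unitary.conjStarAlgAut_apply]
  have hMps : (Bᴴ * B - (c:ℂ) • 1).PosSemidef := by
    rw [hM]
    exact (hDps.mul_mul_conjTranspose_same
      (hA.eigenvectorUnitary : Matrix (Fin d) (Fin d) ℂ) : _)
  have h0 := hMps.dotProduct_mulVec_nonneg x
  rw [Matrix.sub_mulVec, dotProduct_sub] at h0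
  have hAx : star x ⬝ᵥ ((Bᴴ * B) *ᵥ x) =
      ((∑ i, ‖B.mulVec x i‖ ^ 2 : ℝ) : ℂ) := by
    rw [← mulVec_mulVec, dotProduct_mulVec, ← star_mulVec]
    rw [dotProduct]
    push_cast
    refine Finset.sum_congr rfl fun i _ => ?_
    rw [← Complex.ofReal_pow, Complex.sq_norm, Pi.star_apply, Complex.star_def,
      mul_comm, Complex.mul_conj]
  have hcx : star x ⬝ᵥ (((c:ℂ) • 1) *ᵥ x) = (c:ℂ) := by
    rw [Matrix.smul_mulVec, Matrix.one_mulVec, dotProduct_smul]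
    have : star x ⬝ᵥ x = ((∑ i, ‖x i‖ ^ 2 : ℝ) : ℂ) := by
      rw [dotProduct]
      push_cast
      refine Finset.sum_congr rfl fun i _ => ?_
      rw [← Complex.ofReal_pow, Complex.sq_norm, Pi.star_apply, Complex.star_def,
        mul_comm, Complex.mul_conj]
    rw [this, hx]
    simp
  rw [hAx, hcx, ← Complex.ofReal_sub] at h0
  have := Complex.zero_le_real.mp h0
  linarith

end HongPanAux

/-- Hong–Pan: lower bound for the smallest singular value
`σ_min(T) = min_{|x|=1} |Tx|` of an invertible complex matrix in terms of
the row norms. -/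
theorem stmt_3 (d : ℕ) (hd : 0 < d) (T : Matrix (Fin d) (Fin d) ℂ)
    (hT : T.det ≠ 0)
    (r : Fin d → ℝ) (hr : ∀ i, r i = Real.sqrt (∑ j, ‖T i j‖ ^ 2)) :
    ∀ x : Fin d → ℂ, (∑ i, ‖x i‖ ^ 2) = 1 →
      Real.sqrt (∑ i, ‖T.mulVec x i‖ ^ 2) ≥
        (((d : ℝ) - 1) / d) ^ (((d : ℝ) - 1) / 2) * ‖T.det‖ *
          (Finset.univ.inf' ⟨⟨0, hd⟩, Finset.mem_univ _⟩ r) / ∏ i, r i := by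
  intro x hx
  have hS : ∀ i, (0:ℝ) ≤ ∑ j, ‖T i j‖ ^ 2 :=
    fun i => Finset.sum_nonneg fun j _ => sq_nonneg _
  have hr2 : ∀ i, r i ^ 2 = ∑ j, ‖T i j‖ ^ 2 := fun i => by
    rw [hr i, Real.sq_sqrt (hS i)]
  have hrpos : ∀ i, 0 < r i := by
    intro i
    rw [hr i]
    apply Real.sqrt_pos.mpr
    rcases (hS i).lt_or_eq with h | h
    · exact h
    · exfalso
      apply hT
      refine Matrix.det_eq_zero_of_row_eq_zero i fun j => ?_
      have h1 := (Finset.sum_eq_zero_iff_of_nonneg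
        (fun j _ => sq_nonneg (‖T i j‖))).mp h.symm j (Finset.mem_univ j)
      have h2 := pow_eq_zero_iff (n := 2) (by norm_num) |>.mp h1
      exact norm_eq_zero.mp h2
  set B : Matrix (Fin d) (Fin d) ℂ := diagonal (fun i => ((r i : ℂ))⁻¹) * T with hBdef
  have hBentry : ∀ i j, B i j = (r i : ℂ)⁻¹ * T i j := fun i j => diagonal_mul _ _ _ _
  have hrC : ∀ i, (r i : ℂ) ≠ 0 := fun i => by
    exact_mod_cast Complex.ofReal_ne_zero.mpr (hrpos i).ne'
  have hBdet : B.det = (∏ i, ((r i : ℂ)))⁻¹ * T.det := by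
    rw [hBdef, det_mul, det_diagonal, ← Finset.prod_inv_distrib]
  have hBdet_ne : B.det ≠ 0 := by
    rw [hBdet]
    exact mul_ne_zero (inv_ne_zero (Finset.prod_ne_zero_iff.mpr fun i _ => hrC i)) hT
  have hprodr : (0:ℝ) < ∏ i, r i := Finset.prod_pos fun i _ => hrpos i
  have habsdet : ‖B.det‖ = (∏ i, r i)⁻¹ * ‖T.det‖ := by
    rw [hBdet, norm_mul, norm_inv]
    congr 1
    rw [← Complex.ofReal_prod, Complex.norm_of_nonneg hprodr.le]
  have htrB : ∑ i, ∑ j, ‖B i j‖ ^ 2 = (d:ℝ) := by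
    have hrow : ∀ i, ∑ j, ‖B i j‖ ^ 2 = 1 := by
      intro i
      have : ∀ j, ‖B i j‖ ^ 2 = (r i)⁻¹ ^ 2 * ‖T i j‖ ^ 2 := by
        intro j
        rw [hBentry i j, norm_mul, norm_inv, Complex.norm_of_nonneg (hrpos i).le]
        ring
      rw [Finset.sum_congr rfl fun j _ => this j, ← Finset.mul_sum, ← hr2 i]
      field_simp
      exact div_self (hrpos i).ne'
    rw [Finset.sum_congr rfl fun i _ => hrow i]
    simp
  have hcore := core d hd B hBdet_ne (le_of_eq htrB) x hx
  set rmin : ℝ := Finset.univ.inf' ⟨⟨0, hd⟩, Finset.mem_univ _⟩ r with hrmin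
  have hrmin_le : ∀ i, rmin ≤ r i := fun i => Finset.inf'_le r (Finset.mem_univ i)
  have hrminpos : 0 < rmin := by
    obtain ⟨i, -, hi⟩ := Finset.exists_mem_eq_inf' ⟨⟨0, hd⟩, Finset.mem_univ _⟩ r
    rw [hrmin, hi]
    exact hrpos i
  have hTx : ∀ i, ‖T.mulVec x i‖ ^ 2 = r i ^ 2 * ‖B.mulVec x i‖ ^ 2 := by
    intro i
    have h1 : B.mulVec x i = (r i : ℂ)⁻¹ * T.mulVec x i := by
      rw [hBdef, ← mulVec_mulVec]
      exact mulVec_diagonal _ _ _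
    have h2 : T.mulVec x i = (r i : ℂ) * B.mulVec x i := by
      rw [h1, ← mul_assoc, mul_inv_cancel₀ (hrC i), one_mul]
    rw [h2, norm_mul, Complex.norm_of_nonneg (hrpos i).le]
    ring
  have hstep : rmin ^ 2 * ((((d:ℝ) - 1) / d) ^ (d - 1) * ‖B.det‖ ^ 2) ≤
      ∑ i, ‖T.mulVec x i‖ ^ 2 := by
    calc rmin ^ 2 * ((((d:ℝ) - 1) / d) ^ (d - 1) * ‖B.det‖ ^ 2)
        ≤ rmin ^ 2 * ∑ i, ‖B.mulVec x i‖ ^ 2 :=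
          mul_le_mul_of_nonneg_left hcore (sq_nonneg rmin)
      _ = ∑ i, rmin ^ 2 * ‖B.mulVec x i‖ ^ 2 := Finset.mul_sum _ _ _
      _ ≤ ∑ i, r i ^ 2 * ‖B.mulVec x i‖ ^ 2 :=
          Finset.sum_le_sum fun i _ => mul_le_mul_of_nonneg_right
            (pow_le_pow_left₀ hrminpos.le (hrmin_le i) 2) (sq_nonneg _)
      _ = ∑ i, ‖T.mulVec x i‖ ^ 2 :=
          (Finset.sum_congr rfl fun i _ => (hTx i).symm)
  have hd1R : (0:ℝ) ≤ (d:ℝ) - 1 := by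
    have : (1:ℝ) ≤ d := by exact_mod_cast hd
    linarith
  have hb : (0:ℝ) ≤ ((d:ℝ)-1)/d := div_nonneg hd1R (Nat.cast_nonneg d)
  have hrpow : (((d:ℝ) - 1) / d) ^ (((d:ℝ) - 1) / 2) =
      Real.sqrt ((((d:ℝ) - 1) / d) ^ (d - 1)) := by
    rw [Real.sqrt_eq_rpow, ← Real.rpow_natCast (((d:ℝ)-1)/d) (d-1), ← Real.rpow_mul hb]
    congr 1
    push_cast [Nat.cast_sub hd]
    ring
  have hfinal := Real.sqrt_le_sqrt hstep
  rw [Real.sqrt_mul (sq_nonneg rmin), Real.sqrt_sq hrminpos.le,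
    Real.sqrt_mul (pow_nonneg hb _), Real.sqrt_sq (norm_nonneg _)] at hfinal
  rw [ge_iff_le, hrpow]
  refine le_trans (le_of_eq ?_) hfinal
  rw [habsdet]
  ring
end

section
/- Let n = (n₁,...,n_d) be a unit vector with n_d > 0, and let T_n^{-1} be the matrix with identity (d-1)×(d-1) upper-left block, zero last column except 1 in position (d,d), and last row (n₁/n_d,...,n_{d-1}/n_d,1). Then the smallest singular value of T_n^{-1} satisfies σ_min(T_n^{-1}) ≥ ((d-1)/d)^{(d-1)/2} · n_d. -/
open Matrix


private lemma stmt6_disc (nn s : ℝ) (hn1 : nn^2 ≤ 1) :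
    (nn^2 + s*(1-nn^2) - nn^4/2)^2 ≥ 4*nn^2*(1-nn^2)*s*(1-s) := by
  rcases eq_or_lt_of_le hn1 with h | h
  · rw [← h]; nlinarith [sq_nonneg nn]
  · nlinarith [sq_nonneg (2*(1-nn^2)*((1-nn^2)+4*nn^2)*s - (1-nn^2)*nn^2*(nn^2+2)),
      mul_nonneg (mul_nonneg (sub_nonneg.2 hn1) (pow_nonneg (sq_nonneg nn) 3))
        (by positivity : (0:ℝ) ≤ (nn^2-1)^2+1),
      mul_pos (sub_pos.2 h) (by positivity : (0:ℝ) < 1+3*nn^2)]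

private lemma stmt6_core (nn b A s : ℝ) (hnn : 0 < nn) (hn1 : nn^2 ≤ 1)
    (hsb : s + b^2 = 1) (hcs : A^2 ≤ (1 - nn^2) * s) (hs : 0 ≤ s) :
    s * nn^2 + (A + nn*b)^2 ≥ nn^4 / 2 := by
  rcases le_or_gt (nn^2) s with h | h
  · nlinarith [sq_nonneg (A + nn*b), sq_nonneg nn, mul_pos hnn hnn]
  · have hprod : -(|A| * |b|) ≤ A * b := by rw [← abs_mul]; exact neg_abs_le _
    set a := |A| with hadef
    set b0 := |b| with hbdef
    have ha2 : a^2 = A^2 := sq_abs A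
    have hb2 : b0^2 = b^2 := sq_abs b
    have ha0 : 0 ≤ a := abs_nonneg A
    have hb00 : 0 ≤ b0 := abs_nonneg b
    clear_value a b0
    have hb1 : b0^2 = 1 - s := by linarith
    have habs : (A + nn*b)^2 ≥ (nn*b0 - a)^2 := by nlinarith
    have hs1 : s ≤ 1 := by nlinarith
    have hu : 0 ≤ 1 - nn^2 := by linarith
    have hr2 : (Real.sqrt ((1-nn^2)*s))^2 = (1-nn^2)*s := Real.sq_sqrt (mul_nonneg hu hs)
    set r := Real.sqrt ((1-nn^2)*s) with hrdef
    have hr0 : 0 ≤ r := Real.sqrt_nonneg _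
    clear_value r
    have har : a ≤ r := by nlinarith
    have hrb : r ≤ nn*b0 := by
      have h1 : r^2 ≤ (nn*b0)^2 := by nlinarith
      nlinarith [mul_nonneg hnn.le hb00]
    have key : a^2 - 2*nn*a*b0 ≥ r^2 - 2*nn*r*b0 := by
      nlinarith [mul_nonneg (sub_nonneg.2 har) (by linarith : (0:ℝ) ≤ 2*nn*b0 - r - a)]
    have hX0 : 0 ≤ nn^2 + s*(1-nn^2) - nn^4/2 := by nlinarith [sq_nonneg nn]
    have hXr : 2*nn*r*b0 ≤ nn^2 + s*(1-nn^2) - nn^4/2 := by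
      have hd := stmt6_disc nn s hn1
      have hsq : (2*nn*r*b0)^2 = 4*nn^2*(1-nn^2)*s*(1-s) := by
        have e : (2*nn*r*b0)^2 = 4*nn^2*(r^2)*(b0^2) := by ring
        rw [e, hr2, hb1]; ring
      have hy0 : 0 ≤ 2*nn*r*b0 := by positivity
      have h2 : (2*nn*r*b0)^2 ≤ (nn^2 + s*(1-nn^2) - nn^4/2)^2 := by rw [hsq]; exact hd
      exact (pow_le_pow_iff_left₀ hy0 hX0 two_ne_zero).1 h2
    have hb1' : nn^2*(b0^2) = nn^2*(1-s) := by rw [hb1]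
    have e2 : (nn*b0 - a)^2 = nn^2*(b0^2) - 2*nn*a*b0 + a^2 := by ring
    linarith [habs, e2, hb1', key, hr2, hXr]

/-- lower bound on the smallest singular value of the inverse
shear matrix `T_n^{-1}`: for every unit vector `x`,
`|T_n^{-1} x| ≥ ((d-1)/d)^{(d-1)/2} · n_d`. -/
theorem stmt_6 (d : ℕ) (n : Fin (d + 1) → ℝ)
    (hn_unit : ∑ i, n i ^ 2 = 1) (hnd : 0 < n (Fin.last d))
    (S : Matrix (Fin (d + 1)) (Fin (d + 1)) ℝ)
    (hS : ∀ i j, S i j =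
      if i = Fin.last d then
        (if j = Fin.last d then 1 else n j / n (Fin.last d))
      else (if i = j then 1 else 0)) :
    ∀ x : Fin (d + 1) → ℝ, (∑ i, x i ^ 2) = 1 →
      Real.sqrt (∑ i, (S.mulVec x i) ^ 2) ≥
        ((d : ℝ) / (d + 1)) ^ ((d : ℝ) / 2) * n (Fin.last d) := by
  intro x hx
  set nn := n (Fin.last d) with hnn_def
  set s := ∑ i : Fin d, x i.castSucc ^ 2 with hs_def
  set A := ∑ i : Fin d, n i.castSucc * x i.castSucc with hA_def
  set b := x (Fin.last d) with hb_def
  set t := ∑ i : Fin d, n i.castSucc ^ 2 with ht_def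
  -- decomposition of the unit-norm conditions
  have hxsum : s + b ^ 2 = 1 := by
    rw [hs_def, hb_def, ← Fin.sum_univ_castSucc (f := fun i => x i ^ 2)]; exact hx
  have hnsum : t + nn ^ 2 = 1 := by
    rw [ht_def, hnn_def, ← Fin.sum_univ_castSucc (f := fun i => n i ^ 2)]; exact hn_unit
  have hs0 : 0 ≤ s := Finset.sum_nonneg fun i _ => sq_nonneg _
  have ht0 : 0 ≤ t := Finset.sum_nonneg fun i _ => sq_nonneg _
  have hn1 : nn ^ 2 ≤ 1 := by linarith
  -- mulVec entries
  have hcast : ∀ i : Fin d, S.mulVec x i.castSucc = x i.castSucc := by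
    intro i
    have hne : i.castSucc ≠ Fin.last d := (Fin.castSucc_lt_last i).ne
    simp [Matrix.mulVec, dotProduct, hS, hne, ite_mul, Finset.sum_ite_eq]
  have hlast : S.mulVec x (Fin.last d) = A / nn + b := by
    rw [Matrix.mulVec, dotProduct]
    rw [Fin.sum_univ_castSucc (f := fun j => S (Fin.last d) j * x j)]
    have h1 : ∀ j : Fin d, S (Fin.last d) j.castSucc * x j.castSucc
        = n j.castSucc * x j.castSucc / nn := by
      intro j
      rw [hS]
      simp [(Fin.castSucc_lt_last j).ne]
      ring
    rw [Finset.sum_congr rfl (fun j _ => h1 j), ← Finset.sum_div]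
    rw [hS]
    simp [hA_def, hb_def]
  -- the quadratic form
  have hQ : ∑ i, (S.mulVec x i) ^ 2 = s + (A / nn + b) ^ 2 := by
    rw [Fin.sum_univ_castSucc (f := fun i => (S.mulVec x i) ^ 2), hlast]
    congr 1
    exact Finset.sum_congr rfl fun i _ => by rw [hcast i]
  -- Cauchy–Schwarz
  have hcs : A ^ 2 ≤ (1 - nn ^ 2) * s := by
    have h := Finset.sum_mul_sq_le_sq_mul_sq Finset.univ
      (fun i : Fin d => n i.castSucc) (fun i => x i.castSucc)
    have ht : t = 1 - nn ^ 2 := by linarith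
    calc A ^ 2 ≤ t * s := h
      _ = (1 - nn ^ 2) * s := by rw [ht]
  -- core bound : Q ≥ nn^2/2
  have hQge : s + (A / nn + b) ^ 2 ≥ nn ^ 2 / 2 := by
    have hcore := stmt6_core nn b A s hnd hn1 hxsum hcs hs0
    have hne : nn ≠ 0 := ne_of_gt hnd
    have he : (A / nn + b) ^ 2 = (A + nn * b) ^ 2 / nn ^ 2 := by
      field_simp
    have hpos : (0:ℝ) < nn ^ 2 := by positivity
    rw [he, ge_iff_le, ← mul_le_mul_iff_of_pos_right hpos]
    have e2 : (s + (A + nn * b) ^ 2 / nn ^ 2) * nn ^ 2 = s * nn ^ 2 + (A + nn * b) ^ 2 := by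
      field_simp
    rw [e2]
    nlinarith [hcore]
  -- conclude
  rw [hQ]
  rcases Nat.eq_zero_or_pos d with hd | hd
  · subst hd
    have hsA : s = 0 ∧ A = 0 := by
      constructor <;> simp [hs_def, hA_def]
    have hb1 : b ^ 2 = 1 := by
      have := hxsum; rw [hsA.1] at this; linarith
    have hQ1 : s + (A / nn + b) ^ 2 = 1 := by
      rw [hsA.1, hsA.2]; simp [hb1]
    rw [hQ1, Real.sqrt_one]
    have hnn1 : nn ≤ 1 := by nlinarith
    rw [ge_iff_le]
    simp only [Nat.cast_zero, zero_div, zero_add, div_one, Real.rpow_zero, one_mul]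
    nlinarith
  · -- d ≥ 1
    have hD : (0:ℝ) < (d:ℝ) := by exact_mod_cast hd
    have hD1 : (0:ℝ) < (d:ℝ) + 1 := by linarith
    have ha0 : (0:ℝ) ≤ (d:ℝ)/((d:ℝ)+1) := by positivity
    have hbern : ((d:ℝ)/((d:ℝ)+1))^(d:ℕ) ≤ 1/2 := by
      have h2 : (2:ℝ) ≤ (1 + 1/(d:ℝ))^(d:ℕ) := by
        have h := one_add_mul_le_pow (a := 1/(d:ℝ)) (le_trans (by norm_num : (-2:ℝ) ≤ 0) (by positivity)) d
        have hinv : (d:ℕ) * (1/(d:ℝ)) = 1 := by field_simp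
        calc (2:ℝ) = 1 + (d:ℕ) * (1/(d:ℝ)) := by rw [hinv]; norm_num
          _ ≤ (1 + 1/(d:ℝ))^(d:ℕ) := h
      have heq : (d:ℝ)/((d:ℝ)+1) = (1 + 1/(d:ℝ))⁻¹ := by
        rw [inv_eq_one_div]; field_simp
      rw [heq, inv_pow]
      calc ((1 + 1/(d:ℝ))^(d:ℕ))⁻¹ ≤ (2:ℝ)⁻¹ := by
            apply inv_anti₀ (by norm_num) h2
        _ = 1/2 := by norm_num
    have hrw : ((d:ℝ)/((d:ℝ)+1)) ^ ((d:ℝ)/2) = Real.sqrt (((d:ℝ)/((d:ℝ)+1))^(d:ℕ)) := by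
      rw [Real.sqrt_eq_rpow, ← Real.rpow_natCast ((d:ℝ)/((d:ℝ)+1)) d,
        ← Real.rpow_mul ha0, mul_one_div]
    rw [ge_iff_le, hrw]
    calc Real.sqrt (((d:ℝ)/((d:ℝ)+1))^(d:ℕ)) * nn
        ≤ Real.sqrt (1/2) * nn :=
          mul_le_mul_of_nonneg_right (Real.sqrt_le_sqrt hbern) hnd.le
      _ = Real.sqrt (nn^2 / 2) := by
          rw [div_eq_mul_inv (nn^2), mul_comm (nn^2), Real.sqrt_mul (by norm_num),
            Real.sqrt_sq hnd.le]
          norm_num [mul_comm]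
      _ ≤ Real.sqrt (s + (A / nn + b) ^ 2) := Real.sqrt_le_sqrt hQge
end

section
/- Let 𝒩 ⊂ ℝ^p and X ⊂ ℝ^q be open sets, and let f: 𝒩 × X → ℝ be a function such that: (1) for every x ∈ X, the map n ↦ f(n,x) is Lipschitz on 𝒩 with Lipschitz constant bounded uniformly in x; and (2) there exists a constant L such that for every k ∈ {1,...,p}, h > 0, and n ∈ 𝒩, the difference quotient x ↦ (f(n + h e_k, x) - f(n,x))/h is Lipschitz on X with constant L (independent of h and n). Then there exists a set 𝒩₀ ⊂ 𝒩 of Lebesgue measure zero such that for every x ∈ X, the function n ↦ f(n,x) is differentiable at every point n ∈ 𝒩 \ 𝒩₀. -/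
open MeasureTheory Filter

lemma step_bound {p q : ℕ} {𝒩 : Set (Fin p → ℝ)} {X : Set (Fin q → ℝ)}
    {f : (Fin p → ℝ) → (Fin q → ℝ) → ℝ} {L : NNReal}
    (h2 : ∀ (k : Fin p) (h : ℝ), 0 < h → ∀ n ∈ 𝒩, n + h • (Pi.single k 1 : Fin p → ℝ) ∈ 𝒩 →
      LipschitzOnWith L (fun x => (f (n + h • (Pi.single k 1 : Fin p → ℝ)) x - f n x) / h) X)
    (k : Fin p) (h : ℝ) (m : Fin p → ℝ) (hm : m ∈ 𝒩)
    (hm' : m + h • (Pi.single k 1 : Fin p → ℝ) ∈ 𝒩)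
    {y z : Fin q → ℝ} (hy : y ∈ X) (hz : z ∈ X) :
    |(f (m + h • (Pi.single k 1 : Fin p → ℝ)) y - f m y) -
      (f (m + h • (Pi.single k 1 : Fin p → ℝ)) z - f m z)| ≤ L * |h| * dist y z := by
  rcases lt_trichotomy h 0 with hneg | rfl | hpos
  · -- apply at base m + h • e with increment -h
    have hbase : m + h • (Pi.single k 1 : Fin p → ℝ) +
        (-h) • (Pi.single k 1 : Fin p → ℝ) = m := by
      rw [add_assoc, ← add_smul]; simp
    have hlip := h2 k (-h) (by linarith) (m + h • (Pi.single k 1 : Fin p → ℝ)) hm'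
      (by rw [hbase]; exact hm)
    have := hlip.dist_le_mul y hy z hz
    rw [Real.dist_eq, div_sub_div_same, hbase] at this
    rw [abs_div] at this
    have habs : |(-h)| = |h| := abs_neg h
    rw [habs] at this
    have hpos' : (0:ℝ) < |h| := abs_pos.mpr (ne_of_lt hneg)
    rw [div_le_iff₀ hpos'] at this
    calc |(f (m + h • (Pi.single k 1 : Fin p → ℝ)) y - f m y) -
        (f (m + h • (Pi.single k 1 : Fin p → ℝ)) z - f m z)|
        = |(f m y - f (m + h • (Pi.single k 1 : Fin p → ℝ)) y) -
            (f m z - f (m + h • (Pi.single k 1 : Fin p → ℝ)) z)| := by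
          rw [← abs_neg]; ring_nf
      _ ≤ ↑L * dist y z * |h| := this
      _ = ↑L * |h| * dist y z := by ring
  · simp
  · have hlip := h2 k h hpos m hm hm'
    have := hlip.dist_le_mul y hy z hz
    rw [Real.dist_eq, div_sub_div_same, abs_div] at this
    have hpos' : (0:ℝ) < |h| := abs_pos.mpr (ne_of_gt hpos)
    rw [div_le_iff₀ hpos'] at this
    calc _ ≤ ↑L * dist y z * |h| := this
      _ = ↑L * |h| * dist y z := by ring
lemma tele_bound {p q : ℕ} {𝒩 : Set (Fin p → ℝ)} {X : Set (Fin q → ℝ)}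
    {f : (Fin p → ℝ) → (Fin q → ℝ) → ℝ} {L : NNReal}
    (h2 : ∀ (k : Fin p) (h : ℝ), 0 < h → ∀ n ∈ 𝒩, n + h • (Pi.single k 1 : Fin p → ℝ) ∈ 𝒩 →
      LipschitzOnWith L (fun x => (f (n + h • (Pi.single k 1 : Fin p → ℝ)) x - f n x) / h) X)
    {n : Fin p → ℝ} {r : ℝ} (hball : Metric.ball n r ⊆ 𝒩)
    {v : Fin p → ℝ} (hv : (p : ℝ) * ‖v‖ < r)
    {y z : Fin q → ℝ} (hy : y ∈ X) (hz : z ∈ X) :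
    |(f (n + v) y - f n y) - (f (n + v) z - f n z)| ≤ L * ((p : ℝ) * ‖v‖) * dist y z := by
  have hr : (0:ℝ) < r := lt_of_le_of_lt (by positivity) hv
  -- staircase increments
  set c : ℕ → (Fin p → ℝ) := fun i =>
    if hi : i < p then (v ⟨i, hi⟩) • (Pi.single (⟨i, hi⟩ : Fin p) 1 : Fin p → ℝ) else 0 with hc
  have hcnorm : ∀ i, ‖c i‖ ≤ ‖v‖ := by
    intro i
    rw [hc]
    by_cases hi : i < p
    · simp only [dif_pos hi, norm_smul, Pi.norm_single, norm_one, mul_one, Real.norm_eq_abs]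
      exact norm_le_pi_norm v ⟨i, hi⟩
    · simp [dif_neg hi]
  set w : ℕ → (Fin p → ℝ) := fun k => n + ∑ i ∈ Finset.range k, c i with hw
  have hwmem : ∀ k ≤ p, w k ∈ 𝒩 := by
    intro k hk
    apply hball
    rw [Metric.mem_ball, dist_eq_norm, hw]
    simp only [add_sub_cancel_left]
    calc ‖∑ i ∈ Finset.range k, c i‖ ≤ ∑ i ∈ Finset.range k, ‖c i‖ := norm_sum_le _ _
      _ ≤ ∑ _i ∈ Finset.range k, ‖v‖ := Finset.sum_le_sum (fun i _ => hcnorm i)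
      _ = (k : ℝ) * ‖v‖ := by simp [mul_comm]
      _ ≤ (p : ℝ) * ‖v‖ := by
          apply mul_le_mul_of_nonneg_right _ (norm_nonneg v)
          exact_mod_cast hk
      _ < r := hv
  have hw0 : w 0 = n := by simp [hw]
  have hwp : w p = n + v := by
    show n + ∑ i ∈ Finset.range p, c i = n + v
    congr 1
    rw [← Fin.sum_univ_eq_sum_range c p]
    have : ∀ i : Fin p, c i.val = (v i) • (Pi.single i 1 : Fin p → ℝ) := by
      intro i; rw [hc]; simp [i.isLt]
    rw [Finset.sum_congr rfl (fun i _ => this i)]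
    funext j
    simp [Finset.sum_apply, Pi.single_apply]
  -- telescoping
  set D : (Fin p → ℝ) → ℝ := fun m => f m y - f m z with hD
  have htele : D (n + v) - D n = ∑ k ∈ Finset.range p, (D (w (k+1)) - D (w k)) := by
    rw [Finset.sum_range_sub (fun k => D (w k)) p, hw0, hwp]
  have hstep : ∀ k ∈ Finset.range p, |D (w (k+1)) - D (w k)| ≤ (L : ℝ) * ‖v‖ * dist y z := by
    intro k hk
    have hkp : k < p := Finset.mem_range.mp hk
    have hwk1 : w (k+1) = w k + (v ⟨k, hkp⟩) • (Pi.single (⟨k, hkp⟩ : Fin p) 1 : Fin p → ℝ) := by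
      rw [hw]
      simp only [Finset.sum_range_succ, add_assoc]
      congr 2
      rw [hc]; simp [hkp]
    have hb := step_bound h2 ⟨k, hkp⟩ (v ⟨k, hkp⟩) (w k) (hwmem k hkp.le)
      (by rw [← hwk1]; exact hwmem (k+1) hkp) hy hz
    rw [← hwk1] at hb
    have hvk : |v ⟨k, hkp⟩| ≤ ‖v‖ := norm_le_pi_norm v ⟨k, hkp⟩
    calc |D (w (k+1)) - D (w k)|
        = |(f (w (k+1)) y - f (w k) y) - (f (w (k+1)) z - f (w k) z)| := by rw [hD]; ring_nf
      _ ≤ (L:ℝ) * |v ⟨k, hkp⟩| * dist y z := hb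
      _ ≤ (L:ℝ) * ‖v‖ * dist y z := by
          exact mul_le_mul_of_nonneg_right
            (mul_le_mul_of_nonneg_left hvk (NNReal.coe_nonneg L)) dist_nonneg
  calc |(f (n + v) y - f n y) - (f (n + v) z - f n z)|
      = |D (n + v) - D n| := by rw [hD]; ring_nf
    _ = |∑ k ∈ Finset.range p, (D (w (k+1)) - D (w k))| := by rw [htele]
    _ ≤ ∑ k ∈ Finset.range p, |D (w (k+1)) - D (w k)| := Finset.abs_sum_le_sum_abs _ _
    _ ≤ ∑ k ∈ Finset.range p, (L : ℝ) * ‖v‖ * dist y z := Finset.sum_le_sum hstep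
    _ = (L : ℝ) * ((p : ℝ) * ‖v‖) * dist y z := by
        rw [Finset.sum_const, Finset.card_range]
        push_cast; ring
lemma deriv_dist_bound {p q : ℕ} {𝒩 : Set (Fin p → ℝ)} {X : Set (Fin q → ℝ)}
    {f : (Fin p → ℝ) → (Fin q → ℝ) → ℝ} {L : NNReal}
    (h2 : ∀ (k : Fin p) (h : ℝ), 0 < h → ∀ n ∈ 𝒩, n + h • (Pi.single k 1 : Fin p → ℝ) ∈ 𝒩 →
      LipschitzOnWith L (fun x => (f (n + h • (Pi.single k 1 : Fin p → ℝ)) x - f n x) / h) X)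
    {n : Fin p → ℝ} {r : ℝ} (hr : 0 < r) (hball : Metric.ball n r ⊆ 𝒩)
    {y z : Fin q → ℝ} (hy : y ∈ X) (hz : z ∈ X)
    {Dy Dz : (Fin p → ℝ) →L[ℝ] ℝ}
    (hDy : HasFDerivAt (fun m => f m y) Dy n) (hDz : HasFDerivAt (fun m => f m z) Dz n) :
    ‖Dy - Dz‖ ≤ (L : ℝ) * p * dist y z := by
  apply ContinuousLinearMap.opNorm_le_bound _ (by positivity)
  intro v
  set φ : ℝ → ℝ := fun t => (f (n + t • v) y - f n y) - (f (n + t • v) z - f n z) with hφ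
  have hψ : HasDerivAt (fun t : ℝ => n + t • v) v 0 := by
    simpa using ((hasDerivAt_id (0:ℝ)).smul_const v).const_add n
  have hψ0 : n + (0:ℝ) • v = n := by simp
  have hDy' : HasFDerivAt (fun m => f m y) Dy ((fun t : ℝ => n + t • v) 0) := by
    simpa using hDy
  have hDz' : HasFDerivAt (fun m => f m z) Dz ((fun t : ℝ => n + t • v) 0) := by
    simpa using hDz
  have hφy : HasDerivAt (fun t : ℝ => f (n + t • v) y) (Dy v) 0 :=
    hDy'.comp_hasDerivAt (f := fun t : ℝ => n + t • v) 0 hψ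
  have hφz : HasDerivAt (fun t : ℝ => f (n + t • v) z) (Dz v) 0 :=
    hDz'.comp_hasDerivAt (f := fun t : ℝ => n + t • v) 0 hψ
  have hφd : HasDerivAt φ (Dy v - Dz v) 0 :=
    ((hφy.sub_const (f n y)).sub (hφz.sub_const (f n z)))
  have hslope := hasDerivAt_iff_tendsto_slope.mp hφd
  have hbnd : ∀ᶠ t in nhdsWithin (0:ℝ) {(0:ℝ)}ᶜ,
      ‖slope φ 0 t‖ ≤ (L : ℝ) * p * dist y z * ‖v‖ := by
    have hev : ∀ᶠ t in nhds (0:ℝ), (p : ℝ) * ‖t • v‖ < r := by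
      have hcont : Continuous (fun t : ℝ => (p : ℝ) * ‖t • v‖) := by fun_prop
      have ht : Tendsto (fun t : ℝ => (p : ℝ) * ‖t • v‖) (nhds 0) (nhds 0) := by
        have := hcont.tendsto 0
        simpa using this
      exact ht.eventually_lt_const hr
    filter_upwards [nhdsWithin_le_nhds hev, self_mem_nhdsWithin] with t ht ht0
    have ht0' : t ≠ 0 := ht0
    have hb := tele_bound h2 hball ht hy hz
    have hφ0 : φ 0 = 0 := by simp [hφ, hψ0]
    rw [slope_def_field]
    rw [hφ0, sub_zero, sub_zero]
    rw [norm_div, Real.norm_eq_abs, Real.norm_eq_abs]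
    rw [div_le_iff₀ (abs_pos.mpr ht0')]
    calc |φ t| ≤ (L:ℝ) * ((p:ℝ) * ‖t • v‖) * dist y z := hb
      _ = (L:ℝ) * p * dist y z * ‖v‖ * |t| := by
          rw [norm_smul, Real.norm_eq_abs]; ring
  exact le_of_tendsto hslope.norm hbnd

/-- universality of null sets: if `f(n,x)` is Lipschitz in `n`
uniformly in `x`, and its difference quotients in `n` are Lipschitz in `x`
uniformly in the increment `h` and the point `n`, then there is a single
Lebesgue-null set `𝒩₀ ⊂ 𝒩` outside which `n ↦ f(n,x)` is differentiable,
for every `x ∈ X` simultaneously. -/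
theorem stmt_8 (p q : ℕ) (𝒩 : Set (Fin p → ℝ)) (X : Set (Fin q → ℝ))
    (hNopen : IsOpen 𝒩) (hXopen : IsOpen X)
    (f : (Fin p → ℝ) → (Fin q → ℝ) → ℝ)
    (K : NNReal) (h1 : ∀ x ∈ X, LipschitzOnWith K (fun n => f n x) 𝒩)
    (L : NNReal)
    (h2 : ∀ (k : Fin p) (h : ℝ), 0 < h → ∀ n ∈ 𝒩, n + h • (Pi.single k 1 : Fin p → ℝ) ∈ 𝒩 →
      LipschitzOnWith L (fun x => (f (n + h • (Pi.single k 1 : Fin p → ℝ)) x - f n x) / h) X) :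
    ∃ N₀ ⊆ 𝒩, MeasureTheory.volume N₀ = 0 ∧
      ∀ x ∈ X, ∀ n ∈ 𝒩 \ N₀, DifferentiableAt ℝ (fun m => f m x) n := by
  classical
  obtain ⟨S, hScount, hSdense⟩ := TopologicalSpace.exists_countable_dense (Fin q → ℝ)
  have key : ∀ y, y ∈ X → ∃ N : Set (Fin p → ℝ), MeasureTheory.volume N = 0 ∧
      ∀ n ∈ 𝒩, n ∉ N → DifferentiableAt ℝ (fun m => f m y) n := by
    intro y hy
    obtain ⟨g, hgLip, hEq⟩ := (h1 y hy).extend_real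
    refine ⟨{n | ¬ DifferentiableAt ℝ g n}, ?_, ?_⟩
    · have := hgLip.ae_differentiableAt (μ := MeasureTheory.volume)
      rwa [MeasureTheory.ae_iff] at this
    · intro n hn hnN
      have hgd : DifferentiableAt ℝ g n := not_not.mp hnN
      have heq : (fun m => f m y) =ᶠ[nhds n] g :=
        Filter.eventuallyEq_of_mem (hNopen.mem_nhds hn) hEq
      exact heq.differentiableAt_iff.mpr hgd
  choose! N hN0 hNd using key
  set D := X ∩ S with hDdef
  have hDcount : D.Countable := hScount.mono Set.inter_subset_right
  refine ⟨𝒩 ∩ ⋃ y ∈ D, N y, Set.inter_subset_left, ?_, ?_⟩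
  · apply MeasureTheory.measure_mono_null Set.inter_subset_right
    rw [MeasureTheory.measure_biUnion_null_iff hDcount]
    intro y hy; exact hN0 y hy.1
  intro x hx n hn
  obtain ⟨hnN, hnN0⟩ := hn
  have hdiffD : ∀ y ∈ D, DifferentiableAt ℝ (fun m => f m y) n := by
    intro y hyD
    apply hNd y hyD.1 n hnN
    intro hmem
    exact hnN0 ⟨hnN, Set.mem_biUnion hyD hmem⟩
  obtain ⟨r, hr, hball⟩ := Metric.isOpen_iff.mp hNopen n hnN
  have happrox : ∀ j : ℕ, ∃ y ∈ D, dist y x < 1 / ((j : ℝ) + 1) := by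
    intro j
    obtain ⟨ρ, hρ, hballX⟩ := Metric.isOpen_iff.mp hXopen x hx
    have hεpos : 0 < min (1 / ((j : ℝ) + 1)) ρ := lt_min (by positivity) hρ
    obtain ⟨y, hyS, hyd⟩ := Metric.mem_closure_iff.mp (hSdense x) _ hεpos
    refine ⟨y, ⟨hballX ?_, hyS⟩, ?_⟩
    · rw [Metric.mem_ball, dist_comm]
      exact lt_of_lt_of_le hyd (min_le_right _ _)
    · rw [dist_comm]
      exact lt_of_lt_of_le hyd (min_le_left _ _)
  choose y hyD hyd using happrox
  set Dseq : ℕ → (Fin p → ℝ) →L[ℝ] ℝ :=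
    fun j => fderiv ℝ (fun m => f m (y j)) n with hDseqdef
  have hDF : ∀ j, HasFDerivAt (fun m => f m (y j)) (Dseq j) n :=
    fun j => (hdiffD (y j) (hyD j)).hasFDerivAt
  have hdistD : ∀ i j, dist (Dseq i) (Dseq j) ≤ (L : ℝ) * p * dist (y i) (y j) := by
    intro i j
    rw [dist_eq_norm]
    exact deriv_dist_bound h2 hr hball (hyD i).1 (hyD j).1 (hDF i) (hDF j)
  have hCauchy : CauchySeq Dseq := by
    apply cauchySeq_of_le_tendsto_0 (fun j : ℕ => (L : ℝ) * p * (2 / ((j : ℝ) + 1)))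
    · intro a b Nn ha hb
      have hab : dist (y a) (y b) ≤ 2 / ((Nn : ℝ) + 1) := by
        have hNa : (1:ℝ) / ((a:ℝ)+1) ≤ 1 / ((Nn:ℝ)+1) := by
          gcongr <;> exact_mod_cast ha
        have hNb : (1:ℝ) / ((b:ℝ)+1) ≤ 1 / ((Nn:ℝ)+1) := by
          gcongr <;> exact_mod_cast hb
        calc dist (y a) (y b) ≤ dist (y a) x + dist x (y b) := dist_triangle _ _ _
          _ ≤ 1/((a:ℝ)+1) + 1/((b:ℝ)+1) := by
              rw [dist_comm x (y b)]
              exact add_le_add (hyd a).le (hyd b).le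
          _ ≤ 1/((Nn:ℝ)+1) + 1/((Nn:ℝ)+1) := add_le_add hNa hNb
          _ = 2/((Nn:ℝ)+1) := by ring
      calc dist (Dseq a) (Dseq b) ≤ (L:ℝ) * p * dist (y a) (y b) := hdistD a b
        _ ≤ (L:ℝ) * p * (2/((Nn:ℝ)+1)) := by gcongr
    · have heq : (fun j : ℕ => (L:ℝ) * p * (2 / ((j:ℝ) + 1)))
          = fun j : ℕ => ((L:ℝ) * p * 2) * (1 / ((j:ℝ) + 1)) := by
        funext j; ring
      rw [heq]
      simpa using tendsto_one_div_add_atTop_nhds_zero_nat.const_mul ((L:ℝ) * p * 2)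
  obtain ⟨A, hA⟩ := cauchySeq_tendsto_of_complete hCauchy
  have hmain : HasFDerivAt (fun m => f m x) A n := by
    rw [hasFDerivAt_iff_isLittleO_nhds_zero, Asymptotics.isLittleO_iff]
    intro c hc
    have hdist0 : Filter.Tendsto (fun j : ℕ => dist (y j) x) Filter.atTop (nhds 0) :=
      squeeze_zero (fun j => dist_nonneg) (fun j => (hyd j).le)
        tendsto_one_div_add_atTop_nhds_zero_nat
    have hev1 : Filter.Tendsto (fun j : ℕ => (L:ℝ) * p * dist (y j) x)
        Filter.atTop (nhds 0) := by
      simpa using hdist0.const_mul ((L:ℝ) * p)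
    have hj1 : ∀ᶠ j in Filter.atTop, (L:ℝ) * p * dist (y j) x < c/3 :=
      hev1.eventually_lt_const (by linarith)
    have hj2 : ∀ᶠ j in Filter.atTop, dist (Dseq j) A < c/3 := by
      have := hA.eventually (Metric.ball_mem_nhds A (show (0:ℝ) < c/3 by linarith))
      simpa [Metric.mem_ball] using this
    obtain ⟨j, hj1', hj2'⟩ := (hj1.and hj2).exists
    have hev : ∀ᶠ v : (Fin p → ℝ) in nhds 0, (p:ℝ) * ‖v‖ < r := by
      have hcont : Continuous (fun v : (Fin p → ℝ) => (p:ℝ) * ‖v‖) := by fun_prop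
      have ht : Filter.Tendsto (fun v : (Fin p → ℝ) => (p:ℝ) * ‖v‖) (nhds 0) (nhds 0) := by
        have := hcont.tendsto 0
        simpa using this
      exact ht.eventually_lt_const hr
    have hev2 := Asymptotics.isLittleO_iff.mp
      (hasFDerivAt_iff_isLittleO_nhds_zero.mp (hDF j)) (show (0:ℝ) < c/3 by linarith)
    filter_upwards [hev, hev2] with v hv1 hv2
    have htb := tele_bound h2 hball hv1 hx (hyD j).1
    have hfirst : ‖(f (n+v) x - f n x) - (f (n+v) (y j) - f n (y j))‖ ≤ (c/3) * ‖v‖ := by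
      rw [Real.norm_eq_abs]
      refine le_trans htb ?_
      have h1' : (L:ℝ) * ((p:ℝ) * ‖v‖) * dist x (y j) = ((L:ℝ) * p * dist (y j) x) * ‖v‖ := by
        rw [dist_comm x (y j)]; ring
      rw [h1']
      exact mul_le_mul_of_nonneg_right hj1'.le (norm_nonneg v)
    have hthird : ‖Dseq j v - A v‖ ≤ (c/3) * ‖v‖ := by
      have : ‖(Dseq j - A) v‖ ≤ ‖Dseq j - A‖ * ‖v‖ := (Dseq j - A).le_opNorm v
      rw [ContinuousLinearMap.sub_apply] at this
      refine le_trans this ?_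
      refine mul_le_mul_of_nonneg_right ?_ (norm_nonneg v)
      rw [← dist_eq_norm]
      exact hj2'.le
    calc ‖f (n+v) x - f n x - A v‖
        = ‖((f (n+v) x - f n x) - (f (n+v) (y j) - f n (y j)))
            + ((f (n+v) (y j) - f n (y j)) - Dseq j v) + (Dseq j v - A v)‖ := by
          congr 1; ring
      _ ≤ ‖(f (n+v) x - f n x) - (f (n+v) (y j) - f n (y j))‖
            + ‖(f (n+v) (y j) - f n (y j)) - Dseq j v‖ + ‖Dseq j v - A v‖ := norm_add₃_le
      _ ≤ (c/3) * ‖v‖ + (c/3) * ‖v‖ + (c/3) * ‖v‖ := by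
          refine add_le_add (add_le_add hfirst hv2) hthird
      _ = c * ‖v‖ := by ring
  exact hmain.differentiableAt
end

section
/- Let T be a d×d matrix with rational entries, n ∈ S^{d-1} a unit vector with n ∉ ℝℚ^d, and M ∈ O(d) with M e_d = n. Let f(y) = Σ_{ξ ∈ ℤ^d} c_ξ e^{2πi (Tξ)·y} with Σ |c_ξ| < ∞, and set h(z') = f(M(z',0)) for z' ∈ ℝ^{d-1}. Then for every φ ∈ L¹(ℝ^{d-1}), one has ∫_{ℝ^{d-1}} φ(z') h(λ z') dz' → (Σ_{ξ: Tξ = 0} c_ξ) · ∫_{ℝ^{d-1}} φ(z') dz' as λ → ∞. -/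
open Filter MeasureTheory Matrix
open scoped FourierTransform

lemma aux_RL {m : ℕ} (φ : (Fin m → ℝ) → ℂ) (w : Fin m → ℝ) (hw : w ≠ 0) :
    Tendsto (fun lam : ℝ => ∫ z : Fin m → ℝ,
      φ z * Complex.exp (2 * Real.pi * Complex.I * ((lam * (w ⬝ᵥ z) : ℝ) : ℂ)))
      atTop (nhds 0) := by
  set E := EuclideanSpace ℝ (Fin m)
  set e : E ≃ᵐ (Fin m → ℝ) := (MeasurableEquiv.toLp 2 (Fin m → ℝ)).symm
  have hmp : MeasurePreserving e := EuclideanSpace.volume_preserving_symm_measurableEquiv_toLp (Fin m)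
  set F : E → ℂ := fun v => φ (e v)
  set u : E := (EuclideanSpace.equiv (Fin m) ℝ).symm (-w)
  have hu : u ≠ 0 := by
    simp only [u, ne_eq]
    intro hcon
    apply hw
    have := congrArg (EuclideanSpace.equiv (Fin m) ℝ) hcon
    simpa using (neg_eq_zero.mp (by simpa using this))
  have h1 : Tendsto (fun lam : ℝ => lam • u) atTop (cocompact E) := by
    rw [← Metric.cobounded_eq_cocompact, ← tendsto_norm_atTop_iff_cobounded]
    simp only [norm_smul, Real.norm_eq_abs]
    exact (tendsto_abs_atTop_atTop.atTop_mul_const (norm_pos_iff.mpr hu))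
  have h2 := (tendsto_integral_exp_inner_smul_cocompact (V := E) F).comp h1
  convert h2 using 2 with lam
  rw [← hmp.integral_comp e.measurableEmbedding]
  congr 1 with v
  have hinner : (inner ℝ (v : E) ((lam • u : E)) : ℝ) = -(lam * (w ⬝ᵥ (e v))) := by
    rw [real_inner_smul_right]
    have : (inner ℝ (v : E) u : ℝ) = -(w ⬝ᵥ (e v)) := by
      simp only [u, PiLp.inner_apply, RCLike.inner_apply, dotProduct, e]
      rw [← Finset.sum_neg_distrib]
      refine Finset.sum_congr rfl fun i _ => ?_
      have h1 : (u : E) i = -w i := by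
        simp [u]
      have h2 : (e v : Fin m → ℝ) i = v i := rfl
      show (inner ℝ (v i) (u i) : ℝ) = -(w i * (e v) i)
      rw [h1, h2, RCLike.inner_apply]
      simp
    rw [this]; ring
  show _ = 𝐞 (-inner ℝ v ((lam • u : E))) • F v
  rw [hinner, neg_neg, Circle.smul_def, Real.fourierChar_apply]
  push_cast
  rw [smul_eq_mul]
  show _ = _ * φ (e v)
  ring

lemma aux_irr (m : ℕ) (n : Fin (m + 1) → ℝ)
    (T : Matrix (Fin (m + 1)) (Fin (m + 1)) ℚ)
    (M : Matrix (Fin (m + 1)) (Fin (m + 1)) ℝ)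
    (hn_irr : ¬ ∃ (a : ℝ) (q : Fin (m + 1) → ℚ), n = a • fun i => (q i : ℝ))
    (hM : M ∈ Matrix.orthogonalGroup (Fin (m + 1)) ℝ)
    (hMe : M.mulVec (Pi.single (Fin.last m) 1) = n)
    (ξ : Fin (m + 1) → ℤ)
    (hT : T.mulVec (fun j => (ξ j : ℚ)) ≠ 0)
    (hw : ∀ j : Fin m, (M.vecMul (fun i => ((T.mulVec fun j => (ξ j : ℚ)) i : ℝ))) j.castSucc = 0) :
    False := by
  set u : Fin (m + 1) → ℝ := fun i => ((T.mulVec fun j => (ξ j : ℚ)) i : ℝ) with hu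
  set α : ℝ := (M.vecMul u) (Fin.last m) with hα
  have hv : M.vecMul u = Pi.single (Fin.last m) α := by
    funext i
    refine Fin.lastCases ?_ ?_ i
    · simp [hα]
    · intro j
      rw [hw j, Pi.single_eq_of_ne (Fin.castSucc_lt_last j).ne]
  have hstar : star M = Mᵀ := by
    ext i j; simp [Matrix.star_apply]
  have hMMt : M * Mᵀ = 1 := by
    have := (Matrix.mem_orthogonalGroup_iff _ _).mp hM
    exact this
  have hrec : M.mulVec (M.vecMul u) = u := by
    rw [← Matrix.mulVec_transpose, Matrix.mulVec_mulVec, hMMt, Matrix.one_mulVec]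
  have huαn : u = α • n := by
    rw [← hrec, hv]
    have : (Pi.single (Fin.last m) α : Fin (m+1) → ℝ)
        = α • (Pi.single (Fin.last m) 1 : Fin (m+1) → ℝ) := by
      funext i
      by_cases hi : i = Fin.last m
      · subst hi; simp
      · simp [Pi.single_eq_of_ne hi]
    rw [this, Matrix.mulVec_smul, hMe]
  by_cases hα0 : α = 0
  · apply hT
    funext i
    have h0 : u i = 0 := by rw [huαn, hα0]; simp
    have : ((T.mulVec fun j => (ξ j : ℚ)) i : ℝ) = 0 := h0
    simpa using this
  · exact hn_irr ⟨α⁻¹, T.mulVec (fun j => (ξ j : ℚ)), by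
      rw [← hu, huαn, smul_smul, inv_mul_cancel₀ hα0, one_smul]⟩

/-- mean value of an almost-periodic function on an irrational
hyperplane: with `f(y) = Σ_ξ c_ξ e^{2πi (Tξ)·y}` (T rational, `Σ|c_ξ| < ∞`)
and `h(z') = f(M(z',0))` where `M ∈ O(d)`, `M e_d = n ∉ ℝℚ^d`, one has
`∫ φ(z') h(λz') dz' → (Σ_{Tξ=0} c_ξ) ∫ φ` for every integrable `φ`. -/
theorem stmt_11 (m : ℕ) (n : Fin (m + 1) → ℝ)
    (hn_unit : ∑ i, n i ^ 2 = 1)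
    (hn_irr : ¬ ∃ (a : ℝ) (q : Fin (m + 1) → ℚ), n = a • fun i => (q i : ℝ))
    (T : Matrix (Fin (m + 1)) (Fin (m + 1)) ℚ)
    (M : Matrix (Fin (m + 1)) (Fin (m + 1)) ℝ)
    (hM : M ∈ Matrix.orthogonalGroup (Fin (m + 1)) ℝ)
    (hMe : M.mulVec (Pi.single (Fin.last m) 1) = n)
    (c : (Fin (m + 1) → ℤ) → ℂ)
    (hc : Summable fun ξ => ‖c ξ‖)
    (f : (Fin (m + 1) → ℝ) → ℂ)
    (hf : ∀ y, f y = ∑' ξ : Fin (m + 1) → ℤ,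
      c ξ * Complex.exp (2 * Real.pi * Complex.I *
        (((fun i => ((T.mulVec fun j => (ξ j : ℚ)) i : ℝ)) ⬝ᵥ y : ℝ) : ℂ)))
    (h : (Fin m → ℝ) → ℂ)
    (hh : ∀ z' : Fin m → ℝ, h z' = f (M.mulVec (Fin.snoc z' 0))) :
    ∀ φ : (Fin m → ℝ) → ℂ, Integrable φ →
      Tendsto (fun lam : ℝ => ∫ z' : Fin m → ℝ, φ z' * h (lam • z'))
        atTop
        (nhds ((∑' ξ : Fin (m + 1) → ℤ,
          if T.mulVec (fun j => (ξ j : ℚ)) = 0 then c ξ else 0) *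
            ∫ z' : Fin m → ℝ, φ z')) := by
  intro φ hφ
  set w : (Fin (m+1) → ℤ) → (Fin m → ℝ) := fun ξ j =>
    (M.vecMul (fun i => ((T.mulVec fun j => (ξ j : ℚ)) i : ℝ))) j.castSucc with hwdef
  -- dot product identity
  have hdot : ∀ (ξ : Fin (m+1) → ℤ) (lam : ℝ) (z : Fin m → ℝ),
      ((fun i => ((T.mulVec fun j => (ξ j : ℚ)) i : ℝ)) ⬝ᵥ (M.mulVec (Fin.snoc (lam • z) 0)))
        = lam * (w ξ ⬝ᵥ z) := by
    intro ξ lam z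
    rw [Matrix.dotProduct_mulVec]
    rw [dotProduct, Fin.sum_univ_castSucc]
    simp only [Fin.snoc_castSucc, Fin.snoc_last, mul_zero, add_zero, Pi.smul_apply,
      smul_eq_mul, dotProduct, Finset.mul_sum, hwdef]
    refine Finset.sum_congr rfl fun j _ => by ring
  -- expansion of integrand
  have hexp : ∀ (lam : ℝ) (z : Fin m → ℝ), φ z * h (lam • z) =
      ∑' ξ : Fin (m+1) → ℤ, c ξ * (φ z *
        Complex.exp (2 * Real.pi * Complex.I * ((lam * (w ξ ⬝ᵥ z) : ℝ) : ℂ))) := by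
    intro lam z
    rw [hh, hf, ← tsum_mul_left]
    congr 1; funext ξ
    rw [hdot ξ lam z]; ring
  -- continuity of exp factor
  have hcont : ∀ (lam : ℝ) (v : Fin m → ℝ), Continuous fun z : Fin m → ℝ =>
      Complex.exp (2 * Real.pi * Complex.I * ((lam * (v ⬝ᵥ z) : ℝ) : ℂ)) := by
    intro lam v
    apply Complex.continuous_exp.comp
    apply Continuous.mul continuous_const
    apply Complex.continuous_ofReal.comp
    apply Continuous.mul continuous_const
    exact continuous_finset_sum _ fun i _ => (continuous_const.mul (continuous_apply i))
  -- norm of exp factor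
  have hnorm : ∀ r : ℝ, ‖Complex.exp (2 * Real.pi * Complex.I * (r : ℂ))‖ = 1 := by
    intro r
    have : 2 * (Real.pi : ℂ) * Complex.I * (r : ℂ)
        = ((2 * Real.pi * r : ℝ) : ℂ) * Complex.I := by push_cast; ring
    rw [this, Complex.norm_exp_ofReal_mul_I]
  -- integrability of each term
  have hInt : ∀ (ξ : Fin (m+1) → ℤ) (lam : ℝ), Integrable (fun z : Fin m → ℝ =>
      c ξ * (φ z * Complex.exp (2 * Real.pi * Complex.I * ((lam * (w ξ ⬝ᵥ z) : ℝ) : ℂ)))) := by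
    intro ξ lam
    have hb := hφ.bdd_mul ((hcont lam (w ξ)).aestronglyMeasurable)
      (c := 1) (Eventually.of_forall fun z => le_of_eq (hnorm _))
    have : (fun z : Fin m → ℝ =>
        Complex.exp (2 * Real.pi * Complex.I * ((lam * (w ξ ⬝ᵥ z) : ℝ) : ℂ)) * φ z)
        = fun z => φ z * Complex.exp (2 * Real.pi * Complex.I * ((lam * (w ξ ⬝ᵥ z) : ℝ) : ℂ)) := by
      funext z; ring
    rw [this] at hb
    exact hb.const_mul (c ξ)
  have hsummable : Summable fun ξ : Fin (m+1) → ℤ => ‖c ξ‖ := by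
    simpa using hc
  -- integral of norm
  have hIntNorm : ∀ (ξ : Fin (m+1) → ℤ) (lam : ℝ), (∫ z : Fin m → ℝ, ‖c ξ * (φ z *
      Complex.exp (2 * Real.pi * Complex.I * ((lam * (w ξ ⬝ᵥ z) : ℝ) : ℂ)))‖)
      = ‖c ξ‖ * ∫ z : Fin m → ℝ, ‖φ z‖ := by
    intro ξ lam
    simp_rw [norm_mul, hnorm, mul_one]
    rw [integral_const_mul]
  -- swap integral and sum
  have hswap : ∀ lam : ℝ, (∫ z : Fin m → ℝ, φ z * h (lam • z))
      = ∑' ξ : Fin (m+1) → ℤ, ∫ z : Fin m → ℝ, c ξ * (φ z *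
        Complex.exp (2 * Real.pi * Complex.I * ((lam * (w ξ ⬝ᵥ z) : ℝ) : ℂ))) := by
    intro lam
    rw [show (∫ z : Fin m → ℝ, φ z * h (lam • z)) = ∫ z : Fin m → ℝ,
        ∑' ξ : Fin (m+1) → ℤ, c ξ * (φ z *
          Complex.exp (2 * Real.pi * Complex.I * ((lam * (w ξ ⬝ᵥ z) : ℝ) : ℂ))) from by
      congr 1; funext z; exact hexp lam z]
    refine (integral_tsum_of_summable_integral_norm (fun ξ => hInt ξ lam) ?_).symm
    refine Summable.congr (hsummable.mul_right (∫ z : Fin m → ℝ, ‖φ z‖)) ?_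
    intro ξ
    exact (hIntNorm ξ lam).symm
  -- main convergence
  have hab : ∀ ξ : Fin (m+1) → ℤ, Tendsto (fun lam : ℝ => ∫ z : Fin m → ℝ, c ξ * (φ z *
      Complex.exp (2 * Real.pi * Complex.I * ((lam * (w ξ ⬝ᵥ z) : ℝ) : ℂ)))) atTop
      (nhds ((if T.mulVec (fun j => (ξ j : ℚ)) = 0 then c ξ else 0) * ∫ z : Fin m → ℝ, φ z)) := by

    intro ξ
    by_cases h0 : T.mulVec (fun j => (ξ j : ℚ)) = 0
    · have hw0 : w ξ = 0 := by
        funext j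
        simp only [hwdef, h0]
        simp [Matrix.vecMul]
      simp only [if_pos h0]
      have : ∀ lam : ℝ, (∫ z : Fin m → ℝ, c ξ * (φ z *
          Complex.exp (2 * Real.pi * Complex.I * ((lam * (w ξ ⬝ᵥ z) : ℝ) : ℂ))))
          = c ξ * ∫ z : Fin m → ℝ, φ z := by
        intro lam
        rw [show (fun z : Fin m → ℝ => c ξ * (φ z *
            Complex.exp (2 * Real.pi * Complex.I * ((lam * (w ξ ⬝ᵥ z) : ℝ) : ℂ))))
            = fun z => c ξ * φ z from by
          funext z; rw [hw0]; simp]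
        rw [integral_const_mul]
      simp only [this]
      exact tendsto_const_nhds
    · have hwne : w ξ ≠ 0 := by
        intro hcon
        exact aux_irr m n T M hn_irr hM hMe ξ h0 fun j => congrFun hcon j
      simp only [if_neg h0, zero_mul]
      have hRL := (aux_RL φ (w ξ) hwne).const_mul (c ξ)
      rw [mul_zero] at hRL
      refine hRL.congr fun lam => ?_
      rw [integral_const_mul]
  have hbound : ∀ (lam : ℝ) (ξ : Fin (m+1) → ℤ), ‖∫ z : Fin m → ℝ, c ξ * (φ z *
      Complex.exp (2 * Real.pi * Complex.I * ((lam * (w ξ ⬝ᵥ z) : ℝ) : ℂ)))‖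
      ≤ ‖c ξ‖ * ∫ z : Fin m → ℝ, ‖φ z‖ :=
    fun lam ξ => (norm_integral_le_integral_norm _).trans_eq (hIntNorm ξ lam)
  have key : Tendsto (fun lam : ℝ => ∑' ξ : Fin (m+1) → ℤ, ∫ z : Fin m → ℝ, c ξ * (φ z *
      Complex.exp (2 * Real.pi * Complex.I * ((lam * (w ξ ⬝ᵥ z) : ℝ) : ℂ)))) atTop
      (nhds (∑' ξ : Fin (m+1) → ℤ,
        (if T.mulVec (fun j => (ξ j : ℚ)) = 0 then c ξ else 0) * ∫ z : Fin m → ℝ, φ z)) :=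
    tendsto_tsum_of_dominated_convergence (hsummable.mul_right _) hab
      (Eventually.of_forall hbound)
  rw [show ((∑' ξ : Fin (m + 1) → ℤ,
      if T.mulVec (fun j => (ξ j : ℚ)) = 0 then c ξ else 0) * ∫ z' : Fin m → ℝ, φ z')
      = ∑' ξ : Fin (m+1) → ℤ,
        (if T.mulVec (fun j => (ξ j : ℚ)) = 0 then c ξ else 0) * ∫ z' : Fin m → ℝ, φ z' from
    (tsum_mul_right).symm]
  refine key.congr fun lam => (hswap lam).symm
end
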